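/- For any string S, the number of front pointers of PD(S) is at most the number of zero entries in PD(S[2..]); consequently |F_{PD(S)}| ≤ σ_S. -/

import Mathlib

open List

inductive Shape where
  | nil : Shape
  | node : Shape → Shape → Shape
deriving DecidableEq

inductive BTree (α : Type*) where
  | nil : BTree α
  | node : BTree α → α → BTree α → BTree α

def BTree.shape {α : Type*} : BTree α → Shape
  | .nil => .nil
  | .node l _ r => .node l.shape r.shape

def BTree.rootVal {α : Type*} : BTree α → Option α
  | .nil => none
  | .node _ v _ => some v

section
variable {α : Type*} [LinearOrder α] [Inhabited α]

/-- Parent-distance value at 1-based position `i` of `S`. -/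
def pdVal (S : List α) (i : ℕ) : ℕ :=
  let J := (Finset.Ico 1 i).filter (fun j => S.getD (j-1) default ≤ S.getD (i-1) default)
  if h : J.Nonempty then i - J.max' h else 0

/-- Parent-distance encoding of `S` (1-based positions). -/
def PD (S : List α) : List ℕ := (List.range S.length).map (fun k => pdVal S (k+1))

/-- 0-based index of the leftmost minimum of `S`. -/
def leftmostMinIdx (S : List α) : ℕ :=
  ((List.range S.length).argmin (fun j => S.getD j default)).getD 0

def CTaux : ℕ → List α → BTree α
  | 0, _ => .nil
  | (n+1), S =>
    if S.isEmpty then .nil else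
      let i := leftmostMinIdx S
      .node (CTaux n (S.take i)) (S.getD i default) (CTaux n (S.drop (i+1)))

/-- The (labeled) Cartesian tree of `S`. -/
def CT (S : List α) : BTree α := CTaux S.length S

/-- Front pointers of a sequence `u` of naturals (1-based positions `k ≥ 2` with `k - u[k] = 1`). -/
def frontPointers (u : List ℕ) : Finset ℕ :=
  (Finset.Icc 2 u.length).filter (fun k => k - u.getD (k-1) 0 = 1)

/-- `FP(S)[i]`: number of front pointers of `PD(S[i..])` (1-based `i`). -/
def FPval (S : List α) (i : ℕ) : ℕ := (frontPointers (PD (S.drop (i-1)))).card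

/-- The FP encoding of `S`. -/
def FP (S : List α) : List ℕ := (List.range S.length).map (fun k => FPval S (k+1))

end

section
set_option linter.unusedSectionVars false
variable {α : Type*} [LinearOrder α] [Inhabited α]

lemma pd_getD (S : List α) (k : ℕ) (h1 : 1 ≤ k) (h2 : k ≤ S.length) :
    (PD S).getD (k-1) 0 = pdVal S k := by
  have hk : k - 1 < (PD S).length := by simp [PD]; omega
  rw [List.getD_eq_getElem _ _ hk]
  simp only [PD, List.getElem_map, List.getElem_range]
  congr 1
  omega

lemma front_iff (S : List α) (k : ℕ) (hk2 : 2 ≤ k) (hkn : k ≤ S.length) :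
    k - (PD S).getD (k-1) 0 = 1 ↔
      (S.getD 0 default ≤ S.getD (k-1) default ∧
       ∀ j, 2 ≤ j → j < k → ¬ S.getD (j-1) default ≤ S.getD (k-1) default) := by
  rw [pd_getD S k (by omega) hkn]
  unfold pdVal
  set J := (Finset.Ico 1 k).filter
      (fun j => S.getD (j-1) default ≤ S.getD (k-1) default) with hJ
  have hmemJ : ∀ j, j ∈ J ↔ (1 ≤ j ∧ j < k ∧ S.getD (j-1) default ≤ S.getD (k-1) default) := by
    intro j; simp [hJ, Finset.mem_filter, Finset.mem_Ico, and_assoc]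
  constructor
  · intro h
    by_cases hne : J.Nonempty
    · rw [dif_pos hne] at h
      have hmax := J.max'_mem hne
      rw [hmemJ] at hmax
      have hm1 : J.max' hne = 1 := by omega
      constructor
      · have := hmax.2.2
        simpa [hm1] using this
      · intro j hj2 hjk hle
        have : j ∈ J := (hmemJ j).2 ⟨by omega, hjk, hle⟩
        have := J.le_max' j this
        omega
    · rw [dif_neg hne] at h; omega
  · rintro ⟨h1, h2⟩
    have h1J : (1 : ℕ) ∈ J := (hmemJ 1).2 ⟨le_refl 1, by omega, by simpa using h1⟩
    have hne : J.Nonempty := ⟨1, h1J⟩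
    rw [dif_pos hne]
    have hmax := J.max'_mem hne
    rw [hmemJ] at hmax
    have : J.max' hne = 1 := by
      by_contra hne1
      exact h2 _ (by omega) hmax.2.1 hmax.2.2
    omega

lemma drop_getD (S : List α) (i : ℕ) (h : i + 1 < S.length) :
    (S.drop 1).getD i default = S.getD (i+1) default := by
  rw [List.getD_eq_getElem _ _ (by simp; omega), List.getD_eq_getElem _ _ (by omega),
    List.getElem_drop]
  congr 1
  omega

lemma pd_zero_of_front (S : List α) (k : ℕ) (hk2 : 2 ≤ k) (hkn : k ≤ S.length)
    (h : ∀ j, 2 ≤ j → j < k → ¬ S.getD (j-1) default ≤ S.getD (k-1) default) :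
    pdVal (S.drop 1) (k-1) = 0 := by
  unfold pdVal
  rw [dif_neg]
  rw [Finset.not_nonempty_iff_eq_empty, Finset.filter_eq_empty_iff]
  intro j hj
  rw [Finset.mem_Ico] at hj
  have hjd : (S.drop 1).getD (j-1) default = S.getD j default := by
    rw [drop_getD S (j-1) (by omega)]; congr 1; omega
  have hkd : (S.drop 1).getD (k-1-1) default = S.getD (k-1) default := by
    rw [drop_getD S (k-1-1) (by omega)]; congr 1; omega
  rw [hjd, hkd]
  have := h (j+1) (by omega) (by omega)
  simpa using this

lemma card_filter_eq_count (f : ℕ → ℕ) (n : ℕ) :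
    ((Finset.range n).filter (fun i => f i = 0)).card = ((List.range n).map f).count 0 := by
  induction n with
  | zero => simp
  | succ n ih =>
    rw [Finset.range_add_one, List.range_succ, Finset.filter_insert]
    by_cases h : f n = 0
    · rw [if_pos h, Finset.card_insert_of_notMem (by simp)]
      simp [List.count_append, h, ih]
    · rw [if_neg h]
      simp [List.count_append, List.count_singleton, h, ih]

end

/-- The number of front pointers of `PD(S)` is at most the number of zeros of
`PD(S[2..])`, and consequently at most the number of distinct characters of `S`. -/
theorem stmt10 {α : Type*} [LinearOrder α] [Inhabited α] (S : List α) :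
    (frontPointers (PD S)).card ≤ (PD (S.drop 1)).count 0 ∧
    (frontPointers (PD S)).card ≤ S.toFinset.card := by
  have hlenPD : (PD S).length = S.length := by simp [PD]
  have hmemFP : ∀ k ∈ frontPointers (PD S),
      2 ≤ k ∧ k ≤ S.length ∧ S.getD 0 default ≤ S.getD (k-1) default ∧
      ∀ j, 2 ≤ j → j < k → ¬ S.getD (j-1) default ≤ S.getD (k-1) default := by
    intro k hk
    rw [frontPointers, Finset.mem_filter, Finset.mem_Icc, hlenPD] at hk
    obtain ⟨⟨h2, hn⟩, hc⟩ := hk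
    have := (front_iff S k h2 hn).1 hc
    exact ⟨h2, hn, this.1, this.2⟩
  constructor
  · have hcnt : (PD (S.drop 1)).count 0 =
        ((Finset.range (S.drop 1).length).filter
          (fun i => pdVal (S.drop 1) (i+1) = 0)).card := by
      rw [PD, ← card_filter_eq_count]
    rw [hcnt]
    apply Finset.card_le_card_of_injOn (fun k => k - 2)
    · intro k hk
      obtain ⟨h2, hn, _, hfar⟩ := hmemFP k hk
      rw [Finset.mem_coe, Finset.mem_filter, Finset.mem_range]
      constructor
      · simp; omega
      · have : pdVal (S.drop 1) (k-1) = 0 := pd_zero_of_front S k h2 hn hfar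
        have hk1 : k - 2 + 1 = k - 1 := by omega
        rw [hk1]; exact this
    · intro a ha b hb hab
      obtain ⟨ha2, _, _⟩ := hmemFP a ha
      obtain ⟨hb2, _, _⟩ := hmemFP b hb
      simp only at hab
      omega
  · apply Finset.card_le_card_of_injOn (fun k => S.getD (k-1) default)
    · intro k hk
      obtain ⟨h2, hn, _, _⟩ := hmemFP k hk
      rw [Finset.mem_coe, List.mem_toFinset]
      beta_reduce
      rw [List.getD_eq_getElem _ _ (by omega)]
      exact List.getElem_mem _
    · intro a ha b hb hab
      obtain ⟨ha2, han, _, hafar⟩ := hmemFP a ha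
      obtain ⟨hb2, hbn, _, hbfar⟩ := hmemFP b hb
      simp only at hab
      by_contra hne
      rcases lt_or_gt_of_ne hne with hlt | hgt
      · exact hbfar a ha2 hlt (le_of_eq hab)
      · exact hafar b hb2 hgt (le_of_eq hab.symm)
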